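/- For any instance I=(p_t)_{t∈[n]}, any prediction Î=(p̂_t)_{t∈[n]}, and any subset S ⊆ [n], τ([1,n], I, I_S ∪ Î_{[n]∖S}) ≤ τ([1,n], I, Î); that is, replacing any subset of predicted values with the true demand values does not increase the auxiliary error (Monotonicity). -/

import Mathlib

open Finset

/-- Waiting time from `t` until the first acknowledgment in `X` at or after `t` (`0` if none). -/
noncomputable def ackWait (X : Finset ℕ) (t : ℕ) : ℕ :=
  if h : (X.filter fun x => t ≤ x).Nonempty then (X.filter fun x => t ≤ x).min' h - t else 0

/-- Delay cost `D(I,X)` of solution `X` for the instance `p` on horizon `{a, …, b}`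
with delay parameter `d`. -/
noncomputable def delayCost (d : ℝ) (a b : ℕ) (p : ℕ → ℝ) (X : Finset ℕ) : ℝ :=
  (1 / d) * ∑ t ∈ Finset.Icc a b, p t * (ackWait X t : ℝ)

/-- Total cost `F(I,X) = |X| + D(I,X)`. -/
noncomputable def cost (d : ℝ) (a b : ℕ) (p : ℕ → ℝ) (X : Finset ℕ) : ℝ :=
  (X.card : ℝ) + delayCost d a b p X

/-- Feasibility of `X` for the instance `p` on horizon `{a,…,b}`: `X` is a nonempty subset of
the horizon and every time with positive demand has an acknowledgment at or after it. -/
def Feasible (a b : ℕ) (p : ℕ → ℝ) (X : Finset ℕ) : Prop :=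
  X.Nonempty ∧ X ⊆ Finset.Icc a b ∧ ∀ t ∈ Finset.Icc a b, 0 < p t → ∃ x ∈ X, t ≤ x

/-- Optimal cost `opt(I)` of the instance `p` on horizon `{a,…,b}`. -/
noncomputable def opt (d : ℝ) (a b : ℕ) (p : ℕ → ℝ) : ℝ :=
  sInf {c : ℝ | ∃ X : Finset ℕ, Feasible a b p X ∧ cost d a b p X = c}

/-- `Δ(I,Y,t) = D(I,Y) − D(I,Y ∪ {t})`. -/
noncomputable def delta (d : ℝ) (a b : ℕ) (p : ℕ → ℝ) (Y : Finset ℕ) (t : ℕ) : ℝ :=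
  delayCost d a b p Y - delayCost d a b p (insert t Y)

/-- Auxiliary error `τ([t1,t2], I, Î) = opt(O(I⟨t1,t2⟩,Î⟨t1,t2⟩)) − opt(U(I⟨t1,t2⟩,Î⟨t1,t2⟩))`. -/
noncomputable def auxErr (d : ℝ) (t1 t2 : ℕ) (p q : ℕ → ℝ) : ℝ :=
  opt d t1 t2 (fun t => max (p t) (q t)) - opt d t1 t2 (fun t => min (p t) (q t))

lemma delayCost_nonneg (d : ℝ) (hd : 0 < d) (a b : ℕ) (p : ℕ → ℝ) (hp : ∀ t, 0 ≤ p t)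
    (X : Finset ℕ) : 0 ≤ delayCost d a b p X := by
  apply mul_nonneg (by positivity)
  exact Finset.sum_nonneg fun t _ => mul_nonneg (hp t) (Nat.cast_nonneg _)

lemma cost_nonneg (d : ℝ) (hd : 0 < d) (a b : ℕ) (p : ℕ → ℝ) (hp : ∀ t, 0 ≤ p t)
    (X : Finset ℕ) : 0 ≤ cost d a b p X :=
  add_nonneg (Nat.cast_nonneg _) (delayCost_nonneg d hd a b p hp X)

lemma cost_mono (d : ℝ) (hd : 0 < d) (a b : ℕ) (p p' : ℕ → ℝ) (h : ∀ t, p t ≤ p' t)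
    (X : Finset ℕ) : cost d a b p X ≤ cost d a b p' X := by
  unfold cost delayCost
  refine (add_le_add_iff_left _).mpr (mul_le_mul_of_nonneg_left ?_ (by positivity))
  exact Finset.sum_le_sum fun t _ => mul_le_mul_of_nonneg_right (h t) (Nat.cast_nonneg _)

lemma opt_mono (d : ℝ) (hd : 0 < d) (a b : ℕ) (p p' : ℕ → ℝ)
    (hp : ∀ t, 0 ≤ p t) (h : ∀ t, p t ≤ p' t) :
    opt d a b p ≤ opt d a b p' := by
  by_cases hab : a ≤ b
  · apply le_csInf
    · refine ⟨cost d a b p' {b}, {b}, ⟨⟨b, Finset.mem_singleton_self b⟩, ?_, ?_⟩, rfl⟩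
      · simp [Finset.singleton_subset_iff, Finset.mem_Icc, hab]
      · intro t ht _
        exact ⟨b, Finset.mem_singleton_self b, (Finset.mem_Icc.mp ht).2⟩
    · rintro c ⟨X, ⟨hne, hsub, hcov⟩, rfl⟩
      have hfeas : Feasible a b p X :=
        ⟨hne, hsub, fun t ht hpt => hcov t ht (lt_of_lt_of_le hpt (h t))⟩
      have h1 : opt d a b p ≤ cost d a b p X := by
        apply csInf_le
        · refine ⟨0, ?_⟩
          rintro c ⟨Y, _, rfl⟩
          exact cost_nonneg d hd a b p hp Y
        · exact ⟨X, hfeas, rfl⟩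
      exact h1.trans (cost_mono d hd a b p p' h X)
  · have key : ∀ r : ℕ → ℝ, opt d a b r = 0 := by
      intro r
      have : {c : ℝ | ∃ X : Finset ℕ, Feasible a b r X ∧ cost d a b r X = c} = ∅ := by
        ext c
        simp only [Set.mem_setOf_eq, Set.mem_empty_iff_false, iff_false]
        rintro ⟨X, ⟨⟨x, hx⟩, hsub, -⟩, -⟩
        have := hsub hx
        rw [Finset.Icc_eq_empty hab] at this
        exact absurd this (Finset.notMem_empty x)
      rw [opt, this, Real.sInf_empty]
    rw [key, key]

/-- Monotonicity of the auxiliary error: replacing the predicted values on any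
subset `S ⊆ [n]` by the true demand values does not increase `τ([1,n],·,·)`. -/
theorem auxErr_monotone (d : ℝ) (hd : 0 < d) (n : ℕ) (p q : ℕ → ℝ)
    (hp : ∀ t, 0 ≤ p t) (hq : ∀ t, 0 ≤ q t)
    (S : Finset ℕ) (hS : S ⊆ Finset.Icc 1 n) :
    auxErr d 1 n p (fun t => if t ∈ S then p t else q t) ≤ auxErr d 1 n p q := by
  unfold auxErr
  apply sub_le_sub
  · apply opt_mono d hd 1 n _ _ (fun t => le_max_of_le_left (hp t))
    intro t
    by_cases ht : t ∈ S <;> simp [ht, le_max_left, max_le_iff, le_max_right]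
  · apply opt_mono d hd 1 n _ _ (fun t => le_min (hp t) (hq t))
    intro t
    by_cases ht : t ∈ S <;> simp [ht, le_min_iff, min_le_left, min_le_right]
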